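/- If b_i is a vertex of the convex hull of {b_j : j ∈ Ω} (i.e., b_i is not in the convex hull of the remaining points), then for every c : Ω → ℝ there exists a ∈ ℝ^d with b_i·a + c_i > b_j·a + c_j for all j ∈ Ω, j ≠ i (strict top-1 reachability under affine score updates with unconstrained real-valued actions). -/

import Mathlib

/-- If `b i` is a vertex of the convex hull of the `b j`, then for every `c` there is an
unconstrained real-valued action `a` making item `i` strictly top-1 under affine scores. -/
theorem vertex_implies_strict_top1_reachable {Ω : Type*} [Fintype Ω] {d : ℕ}
    (b : Ω → (Fin d → ℝ)) (i : Ω)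
    (h : b i ∉ convexHull ℝ {x : Fin d → ℝ | ∃ j : Ω, j ≠ i ∧ b j = x}) :
    ∀ c : Ω → ℝ, ∃ a : Fin d → ℝ, ∀ j : Ω, j ≠ i →
      (∑ k, b j k * a k) + c j < (∑ k, b i k * a k) + c i := by
  intro c
  set S : Set (Fin d → ℝ) := {x : Fin d → ℝ | ∃ j : Ω, j ≠ i ∧ b j = x} with hS
  have hSfin : S.Finite := by
    have : S ⊆ Set.range b := by rintro x ⟨j, _, rfl⟩; exact ⟨j, rfl⟩
    exact (Set.finite_range b).subset this
  have hclosed : IsClosed (convexHull ℝ S) := (hSfin.isCompact_convexHull (𝕜 := ℝ)).isClosed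
  obtain ⟨f, u, hfu, hui⟩ := geometric_hahn_banach_closed_point (convex_convexHull ℝ S)
    hclosed h
  -- f (b j) < u < f (b i) for all j ≠ i
  have hgap : ∀ j : Ω, j ≠ i → f (b j) < u := fun j hj =>
    hfu _ (subset_convexHull ℝ S ⟨j, hj, rfl⟩)
  set ε : ℝ := f (b i) - u with hε
  have hεpos : 0 < ε := by simp [hε]; linarith
  set M : ℝ := Finset.univ.sup' ⟨i, Finset.mem_univ i⟩ (fun j => c j - c i) with hM
  set t : ℝ := (|M| + 1) / ε with ht
  have htpos : 0 < t := div_pos (by positivity) hεpos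
  refine ⟨fun k => t * f (Pi.single k 1), fun j hj => ?_⟩
  have hrepr : ∀ x : Fin d → ℝ, (∑ k, x k * (t * f (Pi.single k 1))) = t * f x := by
    intro x
    have hx : x = ∑ k, x k • (Pi.single k (1:ℝ) : Fin d → ℝ) := by
      ext m; simp [Pi.single_apply]
    calc (∑ k, x k * (t * f (Pi.single k 1)))
        = t * ∑ k, x k * f (Pi.single k 1) := by rw [Finset.mul_sum]; congr 1; ext k; ring
      _ = t * f x := by
          congr 1
          conv_rhs => rw [hx]
          rw [map_sum]
          simp [smul_eq_mul]
  rw [hrepr (b j), hrepr (b i)]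
  have h1 : t * f (b j) ≤ t * (f (b i) - ε) := by
    have := hgap j hj
    have : f (b j) ≤ f (b i) - ε := by simp [hε]; linarith
    nlinarith
  have h2 : c j - c i ≤ M := by rw [hM]; exact Finset.le_sup' (fun j => c j - c i) (Finset.mem_univ j)
  have h3 : M < t * ε := by
    have : t * ε = |M| + 1 := div_mul_cancel₀ _ (ne_of_gt hεpos)
    rw [this]
    calc M ≤ |M| := le_abs_self M
      _ < |M| + 1 := by linarith
  nlinarith
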